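/- For any complex numbers α, β and a complex s with sufficiently large real part, ∑_{m=1}^∞ σ_α(m) σ_β(m) m^{−s} = ζ(s) ζ(s − α) ζ(s − β) ζ(s − α − β) / ζ(2s − α − β) (Ramanujan's identity). -/

import Mathlib

open Complex Finset ArithmeticFunction
open scoped LSeries.notation

/-- The generalized divisor function with complex exponent (σ_w(0) = 0 by convention). -/
noncomputable def sigmaC (w : ℂ) (m : ℕ) : ℂ := ∑ d ∈ m.divisors, (d : ℂ) ^ w

open Complex Finset

lemma natCast_mul_cpow (m n : ℕ) (w : ℂ) :
    ((m * n : ℕ) : ℂ) ^ w = (m : ℂ) ^ w * (n : ℂ) ^ w := by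
  simpa only [Nat.cast_mul, ofReal_natCast]
    using mul_cpow_ofReal_nonneg m.cast_nonneg n.cast_nonneg w

lemma natCast_pow_cpow (p i : ℕ) (w : ℂ) :
    ((p ^ i : ℕ) : ℂ) ^ w = ((p : ℂ) ^ w) ^ i := by
  induction i with
  | zero => simp
  | succ i ih => rw [pow_succ, natCast_mul_cpow, ih, pow_succ]

noncomputable def Ssum (x : ℂ) (n : ℕ) : ℂ := ∑ i ∈ Finset.range (n + 1), x ^ i

lemma Ssum_zero (x : ℂ) : Ssum x 0 = 1 := by simp [Ssum]

lemma Ssum_succ (x : ℂ) (n : ℕ) : Ssum x (n + 1) = Ssum x n + x ^ (n + 1) :=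
  Finset.sum_range_succ _ _

lemma Ssum_succ' (x : ℂ) (n : ℕ) : Ssum x (n + 1) = x * Ssum x n + 1 := by
  unfold Ssum
  rw [Finset.sum_range_succ']
  simp [Finset.mul_sum, pow_succ, mul_comm]

lemma Skey (x : ℂ) (m n : ℕ) :
    Ssum x (m + 1) * Ssum x (n + 1) = Ssum x (m + n + 2) + x * (Ssum x m * Ssum x n) := by
  induction n with
  | zero =>
    have h1 : Ssum x 1 = 1 + x := by simp [Ssum, Finset.sum_range_succ]
    have h2 : m + 0 + 2 = (m + 1) + 1 := by ring
    rw [h1, Ssum_zero, h2, Ssum_succ x (m + 1), Ssum_succ x m]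
    ring
  | succ n ih =>
    have h2 : m + (n + 1) + 2 = (m + n + 2) + 1 := by ring
    rw [Ssum_succ x (n + 1), mul_add, ih, h2, Ssum_succ x (m + n + 2), Ssum_succ x m,
      Ssum_succ x n]
    ring

noncomputable def csq (z : ℂ) (i : ℕ) : ℂ := if Even i then z ^ (i / 2) else 0

noncomputable def Usum (x y : ℂ) (e : ℕ) : ℂ :=
  ∑ b ∈ Finset.range (e + 1), Ssum x (e - b) * Ssum x b * y ^ b

noncomputable def Lsum (x y : ℂ) (e : ℕ) : ℂ :=
  ∑ i ∈ Finset.range (e + 1), csq (x * y) i * (Ssum x (e - i) * Ssum y (e - i))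

lemma csq_zero (z : ℂ) : csq z 0 = 1 := by simp [csq]
lemma csq_one (z : ℂ) : csq z 1 = 0 := by simp [csq]
lemma csq_add_two (z : ℂ) (i : ℕ) : csq z (i + 2) = z * csq z i := by
  rcases Nat.even_or_odd i with h | h
  · have h2 : Even (i + 2) := by rw [Nat.even_iff] at h ⊢; omega
    simp only [csq, if_pos h, if_pos h2, Nat.add_div_right i (by norm_num : 0 < 2), pow_succ]
    ring
  · have h1 : ¬ Even i := by rw [Nat.even_iff]; rw [Nat.odd_iff] at h; omega
    have h2 : ¬ Even (i + 2) := by rw [Nat.even_iff]; rw [Nat.odd_iff] at h; omega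
    simp [csq, h1, h2]

lemma Usum_rec (x y : ℂ) (e : ℕ) :
    Usum x y (e + 2) = Ssum x (e + 2) * Ssum y (e + 2) + x * y * Usum x y e := by
  rw [← sub_eq_iff_eq_add']
  have h1 : Usum x y (e + 2) - Ssum x (e + 2) * Ssum y (e + 2)
      = ∑ b ∈ Finset.range (e + 2 + 1),
          (Ssum x (e + 2 - b) * Ssum x b - Ssum x (e + 2)) * y ^ b := by
    rw [show Ssum y (e + 2) = ∑ b ∈ Finset.range (e + 2 + 1), y ^ b from rfl, Finset.mul_sum,
      Usum, ← Finset.sum_sub_distrib]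
    exact Finset.sum_congr rfl fun b _ => by ring
  rw [h1, Finset.sum_range_succ, Finset.sum_range_succ']
  have h2 : (Ssum x (e + 2 - (e + 2)) * Ssum x (e + 2) - Ssum x (e + 2)) * y ^ (e + 2) = 0 := by
    simp [Ssum_zero]
  have h3 : (Ssum x (e + 2 - 0) * Ssum x 0 - Ssum x (e + 2)) * y ^ 0 = 0 := by
    simp [Ssum_zero]
  rw [h2, h3, add_zero, add_zero, Usum, Finset.mul_sum]
  refine Finset.sum_congr rfl fun b hb => ?_
  have hb' : b ≤ e := by simpa using Nat.lt_succ_iff.mp (Finset.mem_range.mp hb)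
  have h4 : e + 2 - (b + 1) = (e - b) + 1 := by omega
  have h5 : (e - b) + b + 2 = e + 2 := by omega
  rw [h4, Skey, h5]
  ring

lemma Lsum_rec (x y : ℂ) (e : ℕ) :
    Lsum x y (e + 2) = Ssum x (e + 2) * Ssum y (e + 2) + x * y * Lsum x y e := by
  rw [Lsum, Finset.sum_range_succ', Finset.sum_range_succ']
  have h0 : csq (x * y) 0 * (Ssum x (e + 2 - 0) * Ssum y (e + 2 - 0)) =
      Ssum x (e + 2) * Ssum y (e + 2) := by simp [csq_zero]
  have h1 : csq (x * y) (0 + 1) * (Ssum x (e + 2 - (0 + 1)) * Ssum y (e + 2 - (0 + 1))) = 0 := by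
    simp [csq_one]
  rw [h0, h1, add_zero, add_comm]
  congr 1
  rw [Lsum, Finset.mul_sum]
  refine Finset.sum_congr rfl fun i hi => ?_
  have h4 : e + 2 - (i + 1 + 1) = e - i := by omega
  rw [h4, show i + 1 + 1 = i + 2 from rfl, csq_add_two]
  ring

lemma Lsum_eq_Usum (x y : ℂ) : ∀ e, Lsum x y e = Usum x y e := by
  intro e
  induction e using Nat.strong_induction_on with
  | _ e ih =>
    match e with
    | 0 =>
      simp only [Lsum, Usum, Finset.sum_range_succ, Finset.sum_range_zero, Nat.sub_self,
        csq_zero, Ssum_zero, pow_zero, mul_one, one_mul, zero_add]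
    | 1 =>
      have hx : Ssum x 1 = 1 + x := by simp [Ssum, Finset.sum_range_succ]
      have hy : Ssum y 1 = 1 + y := by simp [Ssum, Finset.sum_range_succ]
      simp only [Lsum, Usum, Finset.sum_range_succ, Finset.sum_range_zero, Nat.sub_self,
        Nat.sub_zero, csq_zero, csq_one, Ssum_zero, pow_zero, pow_one, zero_add, mul_one,
        one_mul, zero_mul, add_zero]
      rw [hx, hy]
      ring
    | (e + 2) => rw [Lsum_rec, Usum_rec, ih e (by omega)]

open ArithmeticFunction

/-- `n ↦ n^w` as an arithmetic function. -/
noncomputable def powA (w : ℂ) : ArithmeticFunction ℂ :=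
  ⟨fun n => if n = 0 then 0 else (n : ℂ) ^ w, rfl⟩

lemma powA_apply {w : ℂ} {n : ℕ} (hn : n ≠ 0) : powA w n = (n : ℂ) ^ w := if_neg hn

lemma powA_mult (w : ℂ) : (powA w).IsMultiplicative := by
  constructor
  · rw [powA_apply one_ne_zero]
    simp
  · intro m n hmn
    rcases eq_or_ne m 0 with rfl | hm
    · simp [powA]
    rcases eq_or_ne n 0 with rfl | hn
    · simp [powA]
    rw [powA_apply (mul_ne_zero hm hn), powA_apply hm, powA_apply hn, natCast_mul_cpow]

/-- σ_w as an arithmetic function. -/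
noncomputable def sigmaA (w : ℂ) : ArithmeticFunction ℂ :=
  (ArithmeticFunction.zeta : ArithmeticFunction ℕ) * powA w

lemma sigmaA_apply (w : ℂ) (n : ℕ) : sigmaA w n = ∑ d ∈ n.divisors, (d : ℂ) ^ w := by
  rw [sigmaA, coe_zeta_mul_apply]
  exact Finset.sum_congr rfl fun d hd => powA_apply (Nat.pos_of_mem_divisors hd).ne'

lemma sigmaA_mult (w : ℂ) : (sigmaA w).IsMultiplicative :=
  isMultiplicative_zeta.natCast.mul (powA_mult w)

/-- The characteristic function of squares, weighted by `(√n)^w`. -/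
noncomputable def sqA (w : ℂ) : ArithmeticFunction ℂ :=
  ⟨fun n => if n = 0 then 0 else if n.sqrt * n.sqrt = n then ((n.sqrt : ℕ) : ℂ) ^ w else 0, rfl⟩

lemma sqA_apply_sq {w : ℂ} {k : ℕ} (hk : k ≠ 0) : sqA w (k * k) = (k : ℂ) ^ w := by
  have h : (k * k).sqrt = k := Nat.sqrt_eq k
  show (if k * k = 0 then 0 else if (k*k).sqrt * (k*k).sqrt = k*k then (((k*k).sqrt : ℕ) : ℂ) ^ w else 0) = _
  rw [if_neg (mul_ne_zero hk hk), h, if_pos rfl]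

lemma sqA_apply_not_sq {w : ℂ} {n : ℕ} (hn : n.sqrt * n.sqrt ≠ n) : sqA w n = 0 := by
  show (if n = 0 then 0 else if n.sqrt * n.sqrt = n then ((n.sqrt : ℕ) : ℂ) ^ w else 0) = 0
  rcases eq_or_ne n 0 with rfl | h
  · simp
  · rw [if_neg h, if_neg hn]

lemma sqA_one (w : ℂ) : sqA w 1 = 1 := by
  have := sqA_apply_sq (w := w) (k := 1) one_ne_zero
  simpa using this

lemma not_sq_of_ne (m : ℕ) (h : m.sqrt * m.sqrt ≠ m) : ∀ c : ℕ, c * c ≠ m := by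
  intro c hc
  exact h (by rw [← hc, Nat.sqrt_eq c])

lemma sqA_mult (w : ℂ) : (sqA w).IsMultiplicative := by
  constructor
  · exact sqA_one w
  · intro m n hmn
    rcases eq_or_ne m 0 with rfl | hm
    · simp [sqA]
    rcases eq_or_ne n 0 with rfl | hn
    · simp [sqA]
    by_cases hms : m.sqrt * m.sqrt = m
    · by_cases hns : n.sqrt * n.sqrt = n
      · -- both squares
        obtain ⟨a, ha⟩ : ∃ a, a * a = m := ⟨m.sqrt, hms⟩
        obtain ⟨b, hb⟩ : ∃ b, b * b = n := ⟨n.sqrt, hns⟩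
        subst ha hb
        have ha0 : a ≠ 0 := fun h => hm (by simp [h])
        have hb0 : b ≠ 0 := fun h => hn (by simp [h])
        rw [show a * a * (b * b) = (a * b) * (a * b) from by ring, sqA_apply_sq
          (mul_ne_zero ha0 hb0), sqA_apply_sq ha0, sqA_apply_sq hb0, natCast_mul_cpow]
      · -- n not a square, so m * n is not a square
        have : (m * n).sqrt * (m * n).sqrt ≠ m * n := by
          intro h
          have hgcd : IsUnit (gcd n m) := by
            rw [Nat.isUnit_iff]
            exact Nat.Coprime.gcd_eq_one hmn.symm
          have h2 : n * m = ((m*n).sqrt) ^ 2 := by rw [sq, mul_comm n m]; exact h.symm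
          obtain ⟨d, hd⟩ := exists_eq_pow_of_mul_eq_pow hgcd h2
          exact (not_sq_of_ne n hns d) (by rw [← sq, ← hd])
        rw [sqA_apply_not_sq this, sqA_apply_not_sq hns, mul_zero]
    · -- m not a square
      have : (m * n).sqrt * (m * n).sqrt ≠ m * n := by
        intro h
        have hgcd : IsUnit (gcd m n) := by
          rw [Nat.isUnit_iff]
          exact Nat.Coprime.gcd_eq_one hmn
        have h2 : m * n = ((m*n).sqrt) ^ 2 := by rw [sq]; exact h.symm
        obtain ⟨d, hd⟩ := exists_eq_pow_of_mul_eq_pow hgcd h2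
        exact (not_sq_of_ne m hms d) (by rw [← sq, ← hd])
      rw [sqA_apply_not_sq this, sqA_apply_not_sq hms, zero_mul]

lemma mul_prime_pow_apply (f g : ArithmeticFunction ℂ) {p : ℕ} (hp : p.Prime) (e : ℕ) :
    (f * g) (p ^ e) = ∑ i ∈ Finset.range (e + 1), f (p ^ i) * g (p ^ (e - i)) := by
  rw [mul_apply, Nat.sum_divisorsAntidiagonal (fun a b => f a * g b),
    Nat.sum_divisors_prime_pow hp]
  refine Finset.sum_congr rfl fun i hi => ?_
  have hi' : i ≤ e := by have := Finset.mem_range.mp hi; omega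
  rw [Nat.pow_div hi' hp.pos]

lemma sigmaA_prime_pow {w : ℂ} {p : ℕ} (hp : p.Prime) (e : ℕ) :
    sigmaA w (p ^ e) = Ssum ((p : ℂ) ^ w) e := by
  rw [sigmaA, coe_zeta_mul_apply, Nat.sum_divisors_prime_pow hp, Ssum]
  refine Finset.sum_congr rfl fun i _ => ?_
  rw [powA_apply (pow_ne_zero i hp.pos.ne'), natCast_pow_cpow]

lemma sqA_prime_pow {w : ℂ} {p : ℕ} (hp : p.Prime) (i : ℕ) :
    sqA w (p ^ i) = csq ((p : ℂ) ^ w) i := by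
  rcases Nat.even_or_odd i with ⟨j, hj⟩ | hodd
  · rw [hj, pow_add, sqA_apply_sq (pow_ne_zero j hp.pos.ne'), natCast_pow_cpow, csq,
      if_pos ⟨j, rfl⟩, show (j + j) / 2 = j by omega]
  · have hcsq : csq ((p : ℂ) ^ w) i = 0 := by
      rw [csq, if_neg (by rw [Nat.even_iff]; rw [Nat.odd_iff] at hodd; omega)]
    rw [hcsq]
    apply sqA_apply_not_sq
    intro h
    have hdvd : (p ^ i).sqrt ∣ p ^ i := Dvd.intro _ h
    obtain ⟨j, hj, hc⟩ := (Nat.dvd_prime_pow hp).mp hdvd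
    have : p ^ (j + j) = p ^ i := by rw [pow_add, ← hc, h]
    have := Nat.pow_right_injective hp.two_le this
    rw [Nat.odd_iff] at hodd
    omega

lemma innerGeom (x y : ℂ) (m : ℕ) :
    ∑ j ∈ Finset.range (m + 1), y ^ j * (x * y) ^ (m - j) = Ssum x m * y ^ m := by
  induction m with
  | zero => simp [Ssum_zero]
  | succ m ih =>
    rw [Finset.sum_range_succ, Finset.sum_congr rfl
      (fun j hj => show y ^ j * (x*y) ^ (m + 1 - j) = (x*y) * (y ^ j * (x*y) ^ (m - j)) by
        rw [show m + 1 - j = (m - j) + 1 by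
          have := Finset.mem_range.mp hj; omega, pow_succ]
        ring),
      ← Finset.mul_sum, ih, Nat.sub_self, pow_zero, mul_one, Ssum_succ']
    ring

lemma rhs_prime_pow (α β : ℂ) {p : ℕ} (hp : p.Prime) (e : ℕ) :
    (sigmaA α * (powA β * powA (α + β))) (p ^ e) = Usum ((p : ℂ) ^ α) ((p : ℂ) ^ β) e := by
  have hp0 : (p : ℂ) ≠ 0 := Nat.cast_ne_zero.mpr hp.pos.ne'
  have hxy : (p : ℂ) ^ (α + β) = (p : ℂ) ^ α * (p : ℂ) ^ β := cpow_add _ _ hp0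
  have hin : ∀ m, (powA β * powA (α + β)) (p ^ m)
      = Ssum ((p : ℂ) ^ α) m * ((p : ℂ) ^ β) ^ m := by
    intro m
    rw [mul_prime_pow_apply _ _ hp, Finset.sum_congr rfl (fun i hi => show
      powA β (p ^ i) * powA (α + β) (p ^ (m - i))
        = ((p:ℂ)^β) ^ i * (((p:ℂ)^α) * ((p:ℂ)^β)) ^ (m - i) by
      rw [powA_apply (pow_ne_zero i hp.pos.ne'), powA_apply (pow_ne_zero _ hp.pos.ne'),
        natCast_pow_cpow, natCast_pow_cpow, hxy]), innerGeom]
  rw [mul_prime_pow_apply _ _ hp, Usum, ← Finset.sum_range_reflect]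
  refine Finset.sum_congr rfl fun i hi => ?_
  have hi' : i ≤ e := by have := Finset.mem_range.mp hi; omega
  rw [show e + 1 - 1 - i = e - i by omega, hin, sigmaA_prime_pow hp,
    Nat.sub_sub_self hi']
  ring

lemma lhs_prime_pow (α β : ℂ) {p : ℕ} (hp : p.Prime) (e : ℕ) :
    (sqA (α + β) * ((sigmaA α).pmul (sigmaA β))) (p ^ e)
      = Lsum ((p : ℂ) ^ α) ((p : ℂ) ^ β) e := by
  have hp0 : (p : ℂ) ≠ 0 := Nat.cast_ne_zero.mpr hp.pos.ne'
  have hxy : (p : ℂ) ^ (α + β) = (p : ℂ) ^ α * (p : ℂ) ^ β := cpow_add _ _ hp0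
  rw [mul_prime_pow_apply _ _ hp, Lsum]
  refine Finset.sum_congr rfl fun i _ => ?_
  rw [sqA_prime_pow hp, ArithmeticFunction.pmul_apply, sigmaA_prime_pow hp,
    sigmaA_prime_pow hp, hxy]

lemma main_id (α β : ℂ) :
    sqA (α + β) * ((sigmaA α).pmul (sigmaA β)) = sigmaA α * (powA β * powA (α + β)) := by
  refine (ArithmeticFunction.IsMultiplicative.eq_iff_eq_on_prime_powers _
    ((sqA_mult (α + β)).mul ((sigmaA_mult α).pmul (sigmaA_mult β))) _
    ((sigmaA_mult α).mul ((powA_mult β).mul (powA_mult (α + β))))).mpr fun p i hp => ?_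
  rw [lhs_prime_pow α β hp i, rhs_prime_pow α β hp i, Lsum_eq_Usum]

/-! LSeries of powA -/

lemma term_powA (w t : ℂ) (n : ℕ) :
    LSeries.term (↗(powA w)) t n = LSeries.term 1 (t - w) n := by
  rcases eq_or_ne n 0 with rfl | hn
  · simp [LSeries.term]
  · have hnc : (n : ℂ) ≠ 0 := Nat.cast_ne_zero.mpr hn
    rw [LSeries.term_of_ne_zero hn, LSeries.term_of_ne_zero hn, powA_apply hn, Pi.one_apply,
      cpow_sub _ _ hnc, one_div_div]

lemma LSeriesSummable_powA {w t : ℂ} (h : 1 + w.re < t.re) : LSeriesSummable (↗(powA w)) t := by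
  have h1 : LSeriesSummable 1 (t - w) := by
    rw [LSeriesSummable_one_iff, sub_re]; linarith
  unfold LSeriesSummable at h1 ⊢
  rwa [show LSeries.term (↗(powA w)) t = LSeries.term 1 (t - w) from funext (term_powA w t)]

lemma LSeries_powA {w t : ℂ} (h : 1 + w.re < t.re) :
    LSeries (↗(powA w)) t = riemannZeta (t - w) := by
  rw [LSeries, tsum_congr (term_powA w t), ← LSeries,
    LSeries_one_eq_riemannZeta (by rw [sub_re]; linarith)]

/-! LSeries of the coerced zeta -/

lemma zetaC_eq : ↗((ArithmeticFunction.zeta : ArithmeticFunction ℕ) : ArithmeticFunction ℂ)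
    = ↗(ArithmeticFunction.zeta) := by
  funext n
  exact natCoe_apply

lemma LSeriesSummable_zetaC {t : ℂ} (h : 1 < t.re) :
    LSeriesSummable (↗((ArithmeticFunction.zeta : ArithmeticFunction ℕ) : ArithmeticFunction ℂ)) t := by
  rw [zetaC_eq]
  exact (LSeriesSummable_zeta_iff).mpr h

lemma LSeries_zetaC {t : ℂ} (h : 1 < t.re) :
    LSeries (↗((ArithmeticFunction.zeta : ArithmeticFunction ℕ) : ArithmeticFunction ℂ)) t
      = riemannZeta t := by
  rw [zetaC_eq]
  exact LSeries_zeta_eq_riemannZeta h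

/-! LSeries of sqA -/

lemma sq_injective : Function.Injective (fun k : ℕ => k * k) := fun a b h => by
  simpa using Nat.mul_self_inj.mp h

lemma term_sqA_not_sq (w t : ℂ) {n : ℕ} (hn : n ∉ Set.range (fun k : ℕ => k * k)) :
    LSeries.term (↗(sqA w)) t n = 0 := by
  rcases eq_or_ne n 0 with rfl | h0
  · exact LSeries.term_zero _ _
  · rw [LSeries.term_of_ne_zero h0, sqA_apply_not_sq, zero_div]
    intro h
    exact hn ⟨n.sqrt, h⟩

lemma term_sqA_sq (w t : ℂ) (k : ℕ) :
    LSeries.term (↗(sqA w)) t (k * k) = LSeries.term 1 (2 * t - w) k := by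
  rcases eq_or_ne k 0 with rfl | hk
  · simp [LSeries.term]
  · have hkc : (k : ℂ) ≠ 0 := Nat.cast_ne_zero.mpr hk
    have hne : ∀ z : ℂ, (k : ℂ) ^ z ≠ 0 := fun z => by
      simp [cpow_eq_zero_iff, hkc]
    rw [LSeries.term_of_ne_zero (mul_ne_zero hk hk), LSeries.term_of_ne_zero hk,
      sqA_apply_sq hk, Pi.one_apply, natCast_mul_cpow,
      div_eq_div_iff (mul_ne_zero (hne t) (hne t)) (hne (2 * t - w)), one_mul,
      ← cpow_add _ _ hkc, ← cpow_add _ _ hkc]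
    congr 1
    ring

lemma LSeriesSummable_sqA {w t : ℂ} (h : 1 < (2 * t - w).re) :
    LSeriesSummable (↗(sqA w)) t := by
  have h1 : LSeriesSummable 1 (2 * t - w) := LSeriesSummable_one_iff.mpr h
  refine (Function.Injective.summable_iff sq_injective
    fun x hx => term_sqA_not_sq w t hx).mp ?_
  have : (LSeries.term (↗(sqA w)) t) ∘ (fun k : ℕ => k * k) = LSeries.term 1 (2 * t - w) :=
    funext fun k => term_sqA_sq w t k
  rw [this]
  exact h1

lemma LSeries_sqA {w t : ℂ} (h : 1 < (2 * t - w).re) :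
    LSeries (↗(sqA w)) t = riemannZeta (2 * t - w) := by
  rw [LSeries, ← Function.Injective.tsum_eq sq_injective
    (fun x hx => by by_contra hc; exact Function.mem_support.mp hx (term_sqA_not_sq w t hc)),
    tsum_congr (term_sqA_sq w t), ← LSeries,
    LSeries_one_eq_riemannZeta h]

/-! Real-valued comparison functions -/

noncomputable def sigR (c : ℝ) (n : ℕ) : ℝ := ∑ d ∈ n.divisors, (d : ℝ) ^ c

lemma sigR_nonneg (c : ℝ) (n : ℕ) : 0 ≤ sigR c n :=
  Finset.sum_nonneg fun d _ => Real.rpow_nonneg d.cast_nonneg c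

lemma sigmaA_real (c : ℝ) (n : ℕ) : sigmaA (c : ℂ) n = ((sigR c n : ℝ) : ℂ) := by
  rw [sigmaA_apply, sigR, Complex.ofReal_sum]
  refine Finset.sum_congr rfl fun d _ => ?_
  rw [Complex.ofReal_cpow d.cast_nonneg, Complex.ofReal_natCast]

lemma norm_sigmaA_le {w : ℂ} {c : ℝ} (hc : w.re ≤ c) (n : ℕ) : ‖sigmaA w n‖ ≤ sigR c n := by
  rw [sigmaA_apply]
  refine (norm_sum_le _ _).trans (Finset.sum_le_sum fun d hd => ?_)
  have hd0 : 0 < d := Nat.pos_of_mem_divisors hd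
  have hd1 : 1 ≤ (d : ℝ) := by exact_mod_cast hd0
  rw [Complex.norm_natCast_cpow_of_pos hd0]
  exact Real.rpow_le_rpow_of_exponent_le hd1 hc

noncomputable def gR (c : ℝ) (n : ℕ) : ℝ :=
  if n.sqrt * n.sqrt = n ∧ n ≠ 0 then (n.sqrt : ℝ) ^ c else 0

lemma gR_nonneg (c : ℝ) (n : ℕ) : 0 ≤ gR c n := by
  rw [gR]
  split
  · exact Real.rpow_nonneg (Nat.cast_nonneg _) c
  · exact le_rfl

lemma gR_one (c : ℝ) : gR c 1 = 1 := by
  rw [gR, if_pos ⟨by simp, one_ne_zero⟩]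
  simp

lemma sqA_real (c : ℝ) (n : ℕ) : sqA (c : ℂ) n = ((gR c n : ℝ) : ℂ) := by
  rcases eq_or_ne n 0 with rfl | h0
  · simp [gR, ArithmeticFunction.map_zero]
  by_cases hsq : n.sqrt * n.sqrt = n
  · have hk : n.sqrt ≠ 0 := fun h => h0 (by rw [← hsq, h, Nat.zero_mul])
    conv_lhs => rw [← hsq]
    rw [sqA_apply_sq hk, gR, if_pos ⟨hsq, h0⟩, Complex.ofReal_cpow (Nat.cast_nonneg _),
      Complex.ofReal_natCast]
  · rw [sqA_apply_not_sq hsq, gR, if_neg (by tauto)]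
    simp

lemma H_real (a b : ℝ) (n : ℕ) :
    ∃ r : ℝ, 0 ≤ r ∧ (sigmaA (a : ℂ) * (powA (b : ℂ) * powA ((a : ℂ) + (b : ℂ)))) n = (r : ℂ)
      ∧ sigR a n * sigR b n ≤ r := by
  rcases eq_or_ne n 0 with rfl | h0
  · exact ⟨0, le_rfl, by simp [ArithmeticFunction.map_zero], by simp [sigR]⟩
  have hmain := congrArg (fun f : ArithmeticFunction ℂ => f n) (main_id (a : ℂ) (b : ℂ))
  have hab : ((a : ℂ) + (b : ℂ)) = ((a + b : ℝ) : ℂ) := by push_cast; ring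
  refine ⟨∑ p ∈ n.divisorsAntidiagonal, gR (a + b) p.1 * (sigR a p.2 * sigR b p.2),
    Finset.sum_nonneg fun p _ => mul_nonneg (gR_nonneg _ _)
      (mul_nonneg (sigR_nonneg _ _) (sigR_nonneg _ _)), ?_, ?_⟩
  · rw [← hmain, mul_apply, Complex.ofReal_sum]
    refine Finset.sum_congr rfl fun p _ => ?_
    rw [hab, sqA_real, ArithmeticFunction.pmul_apply, sigmaA_real, sigmaA_real]
    push_cast
    ring
  · have hmem : ((1 : ℕ), n) ∈ n.divisorsAntidiagonal := by
      rw [Nat.mem_divisorsAntidiagonal]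
      exact ⟨one_mul n, h0⟩
    have := Finset.single_le_sum
      (f := fun p : ℕ × ℕ => gR (a + b) p.1 * (sigR a p.2 * sigR b p.2))
      (fun p _ => mul_nonneg (gR_nonneg _ _)
        (mul_nonneg (sigR_nonneg _ _) (sigR_nonneg _ _))) hmem
    simpa [gR_one] using this

lemma LSeriesSummable_sigmaA {w t : ℂ} (h1 : 1 < t.re) (h2 : 1 + w.re < t.re) :
    LSeriesSummable (↗(sigmaA w)) t :=
  ArithmeticFunction.LSeriesSummable_mul (LSeriesSummable_zetaC h1) (LSeriesSummable_powA h2)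

lemma LSeries_sigmaA {w t : ℂ} (h1 : 1 < t.re) (h2 : 1 + w.re < t.re) :
    LSeries (↗(sigmaA w)) t = riemannZeta t * riemannZeta (t - w) := by
  have h := ArithmeticFunction.LSeries_mul' (f := (ArithmeticFunction.zeta :
    ArithmeticFunction ℕ)) (g := powA w) (s := t) (LSeriesSummable_zetaC h1)
    (LSeriesSummable_powA h2)
  rw [LSeries_zetaC h1, LSeries_powA h2] at h
  exact h

lemma LSeriesSummable_pmul (α β s : ℂ) (hs : 1 + max α.re 0 + max β.re 0 < s.re) :
    LSeriesSummable (↗((sigmaA α).pmul (sigmaA β))) s := by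
  set a := max α.re 0 with ha
  set b := max β.re 0 with hb
  have ha0 : 0 ≤ a := le_max_right _ _
  have hb0 : 0 ≤ b := le_max_right _ _
  have haα : α.re ≤ a := le_max_left _ _
  have hbβ : β.re ≤ b := le_max_left _ _
  have h1 : (1 : ℝ) < s.re := by linarith
  have hH : LSeriesSummable (↗(sigmaA (a : ℂ) * (powA (b : ℂ) * powA ((a : ℂ) + (b : ℂ)))))
      ((s.re : ℝ) : ℂ) := by
    refine ArithmeticFunction.LSeriesSummable_mul
      (LSeriesSummable_sigmaA ?_ ?_) (ArithmeticFunction.LSeriesSummable_mul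
        (LSeriesSummable_powA ?_) (LSeriesSummable_powA ?_)) <;>
      simp only [Complex.ofReal_re, Complex.add_re] <;> linarith
  have hre : Summable fun n => (LSeries.term
      (↗(sigmaA (a : ℂ) * (powA (b : ℂ) * powA ((a : ℂ) + (b : ℂ))))) ((s.re : ℝ) : ℂ) n).re :=
    (Complex.hasSum_re hH.hasSum).summable
  refine Summable.of_norm_bounded hre fun n => ?_
  rcases eq_or_ne n 0 with rfl | h0
  · simp [LSeries.term]
  obtain ⟨r, hr0, hreq, hrle⟩ := H_real a b n
  have hn0 : (0 : ℝ) < (n : ℝ) := by exact_mod_cast Nat.pos_of_ne_zero h0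
  have hcp : ((n : ℂ) ^ ((s.re : ℝ) : ℂ)) = (((n : ℝ) ^ s.re : ℝ) : ℂ) := by
    rw [Complex.ofReal_cpow hn0.le, Complex.ofReal_natCast]
  rw [LSeries.term_of_ne_zero h0, LSeries.term_of_ne_zero h0, hreq, hcp, ← Complex.ofReal_div,
    Complex.ofReal_re, norm_div, Complex.norm_natCast_cpow_of_pos (Nat.pos_of_ne_zero h0)]
  have hrp : (0 : ℝ) < (n : ℝ) ^ s.re := Real.rpow_pos_of_pos hn0 _
  have hnum : ‖((sigmaA α).pmul (sigmaA β)) n‖ ≤ r := by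
    rw [ArithmeticFunction.pmul_apply, norm_mul]
    refine le_trans ?_ hrle
    exact mul_le_mul (norm_sigmaA_le haα n) (norm_sigmaA_le hbβ n) (norm_nonneg _)
      (sigR_nonneg _ _)
  gcongr


/-- Ramanujan's identity for the Dirichlet series of σ_α(m)σ_β(m). -/
theorem ramanujan_identity (α β s : ℂ)
    (hs : 1 + max α.re 0 + max β.re 0 < s.re) :
    ∑' m : ℕ, sigmaC α m * sigmaC β m / (m : ℂ) ^ s =
      riemannZeta s * riemannZeta (s - α) * riemannZeta (s - β) *
        riemannZeta (s - α - β) / riemannZeta (2 * s - α - β) := by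
  have ha0 : (0 : ℝ) ≤ max α.re 0 := le_max_right _ _
  have hb0 : (0 : ℝ) ≤ max β.re 0 := le_max_right _ _
  have haα : α.re ≤ max α.re 0 := le_max_left _ _
  have hbβ : β.re ≤ max β.re 0 := le_max_left _ _
  have h1 : 1 < s.re := by linarith
  have hα : 1 + α.re < s.re := by linarith
  have hβ : 1 + β.re < s.re := by linarith
  have hαβ : 1 + (α + β).re < s.re := by rw [Complex.add_re]; linarith
  have h2re : (2 * s - (α + β)).re = 2 * s.re - (α.re + β.re) := by
    simp [Complex.sub_re, Complex.add_re, Complex.mul_re]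
  have h2 : 1 < (2 * s - (α + β)).re := by rw [h2re]; linarith
  have h2' : (2 : ℂ) * s - (α + β) = 2 * s - α - β := by ring
  have hFs : LSeriesSummable (↗((sigmaA α).pmul (sigmaA β))) s := LSeriesSummable_pmul α β s hs
  have hGs : LSeriesSummable (↗(sqA (α + β))) s := LSeriesSummable_sqA h2
  have hmul := ArithmeticFunction.LSeries_mul' hGs hFs
  rw [main_id α β] at hmul
  rw [ArithmeticFunction.LSeries_mul' (LSeriesSummable_sigmaA h1 hα)
      (ArithmeticFunction.LSeriesSummable_mul (LSeriesSummable_powA hβ)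
        (LSeriesSummable_powA hαβ)),
    ArithmeticFunction.LSeries_mul' (LSeriesSummable_powA hβ) (LSeriesSummable_powA hαβ),
    LSeries_powA hβ, LSeries_powA hαβ, LSeries_sigmaA h1 hα, LSeries_sqA h2] at hmul
  -- hmul : ζ s * ζ (s-α) * (ζ (s-β) * ζ (s-(α+β))) = ζ (2s-(α+β)) * LSeries ↗pmul s
  have hX : ∑' m : ℕ, sigmaC α m * sigmaC β m / (m : ℂ) ^ s
      = LSeries (↗((sigmaA α).pmul (sigmaA β))) s := by
    rw [LSeries]
    refine tsum_congr fun n => ?_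
    rcases eq_or_ne n 0 with rfl | h0
    · simp [sigmaC, LSeries.term]
    · rw [LSeries.term_of_ne_zero h0, ArithmeticFunction.pmul_apply, sigmaA_apply, sigmaA_apply]
      rfl
  have hZ : riemannZeta (2 * s - α - β) ≠ 0 :=
    riemannZeta_ne_zero_of_one_lt_re (by rw [← h2']; exact h2)
  rw [hX, eq_div_iff hZ]
  rw [h2', show s - (α + β) = s - α - β by ring] at hmul
  linear_combination -hmul
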